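/- arXiv:1110.0189 — 2 statements merged into one kernel-verified Lean document; each statement's English description precedes it below -/
import Mathlib

section
/- For every binary word ω and every m ≥ 1, Γ(ω 2^m) = Γ(ω) 2^m, where Γ is the extended Steingrímsson map on binary words. -/
/-- Count the leading letters of a list equal to `a`; return the count and the rest. -/
def leadCount (a : ℕ) : List ℕ → ℕ × List ℕ
  | [] => (0, [])
  | b :: rest =>
    if b = a then
      let p := leadCount a rest
      (p.1 + 1, p.2)
    else (0, b :: rest)

def blocksAux : ℕ → List ℕ → List (ℕ × ℕ)
  | 0, _ => []
  | _, [] => []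
  | fuel + 1, w =>
    let p := leadCount 1 w
    let q := leadCount 2 p.2
    (p.1, q.1) :: blocksAux fuel q.2

/-- The descent-block decomposition `[(m₀,n₀),…,(m_d,n_d)]` of a binary word
`1^{m₀} 2^{n₀} ⋯ 1^{m_d} 2^{n_d}`. -/
def blocks (w : List ℕ) : List (ℕ × ℕ) := blocksAux w.length w

/-- The word `1^{m₀} 2^{n₀} ⋯ 1^{m_d} 2^{n_d}` determined by blocks. -/
def blockWord (bs : List (ℕ × ℕ)) : List ℕ :=
  bs.flatMap fun p => List.replicate p.1 1 ++ List.replicate p.2 2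

/-- `[(m₀,n₀),…,(m_d,n_d)]` is a valid descent-block decomposition:
`m_i > 0` for `1 ≤ i ≤ d` and `n_j > 0` for `0 ≤ j ≤ d-1`. -/
def ValidBlocks (bs : List (ℕ × ℕ)) : Prop :=
  bs ≠ [] ∧ (∀ p ∈ bs.tail, 0 < p.1) ∧ (∀ p ∈ bs.dropLast, 0 < p.2)

/-- A word on the alphabet {1,2}. -/
def IsBinary (w : List ℕ) : Prop := ∀ a ∈ w, a = 1 ∨ a = 2

/-- The descent number of a word. -/
def des (w : List ℕ) : ℕ := (w.zip w.tail).countP fun p => decide (p.2 < p.1)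

/-- The excedance number of a binary word with `k` ones: the number of
positions `i ≤ k` carrying the letter 2. -/
def exc (w : List ℕ) : ℕ := (w.take (w.count 1)).count 2

/-- `Ψ = Φ₁⁻¹` on binary words, via the descent-block decomposition. -/
def psiBlocks (bs : List (ℕ × ℕ)) : List ℕ :=
  List.replicate (bs.headD (0,0)).1 1
    ++ bs.tail.flatMap (fun p => 2 :: List.replicate (p.1 - 1) 1)
    ++ bs.dropLast.flatMap (fun p => List.replicate (p.2 - 1) 2 ++ [1])
    ++ List.replicate (bs.getLastD (0,0)).2 2

def Psi (w : List ℕ) : List ℕ := psiBlocks (blocks w)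

/-- Foata's second fundamental transformation on binary words. -/
def phi2Blocks (bs : List (ℕ × ℕ)) : List ℕ :=
  bs.tail.reverse.flatMap (fun p => List.replicate (p.1 - 1) 1 ++ [2])
    ++ List.replicate (bs.headD (0,0)).1 1
    ++ bs.dropLast.flatMap (fun p => List.replicate (p.2 - 1) 2 ++ [1])
    ++ List.replicate (bs.getLastD (0,0)).2 2

def Phi2 (w : List ℕ) : List ℕ := phi2Blocks (blocks w)

/-- The extended Steingrímsson map `Γ` on binary words. -/
def gammaBlocks (bs : List (ℕ × ℕ)) : List ℕ :=
  match bs with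
  | [] => []
  | [(m0, n0)] => List.replicate m0 1 ++ List.replicate n0 2
  | (m0, n0) :: rest =>
      List.replicate m0 1
        ++ rest.dropLast.flatMap (fun p => 2 :: List.replicate (p.1 - 1) 1)
        ++ (2 :: List.replicate (rest.getLastD (0,0)).1 1)
        ++ (let ns := n0 :: rest.map Prod.snd
            ns.dropLast.dropLast.flatMap (fun nj => List.replicate (nj - 1) 2 ++ [1])
              ++ List.replicate (ns.dropLast.getLastD 0 - 1 + ns.getLastD 0) 2)

def Gamma (w : List ℕ) : List ℕ := gammaBlocks (blocks w)

/-- The involution `φ` on binary words. -/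
def phi (w : List ℕ) : List ℕ :=
  let bs := blocks w
  let ns := bs.map Prod.snd
  let newms : List ℕ :=
    match (bs.map Prod.fst).reverse with
    | [] => []
    | [a] => [a]
    | a :: rest => (a - 1) :: (rest.dropLast ++ [rest.getLastD 0 + 1])
  blockWord (newms.zip ns)

/-- Fibonacci words: binary words with no two consecutive ones. -/
def IsFib (w : List ℕ) : Prop :=
  IsBinary w ∧ w.Chain' fun a b => ¬(a = 1 ∧ b = 1)

def FibSet (n : ℕ) : Set (List ℕ) := {w | IsFib w ∧ w.length = n}

/-- Fibonacci words of length `n` ending with the letter 1. -/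
def FibSet' (n : ℕ) : Set (List ℕ) :=
  {w | IsFib w ∧ w.length = n ∧ w.getLast? = some 1}

/-- Binary words of length `n` with no two consecutive twos. -/
def GSet (n : ℕ) : Set (List ℕ) :=
  {w | IsBinary w ∧ w.length = n ∧ w.Chain' fun a b => ¬(a = 2 ∧ b = 2)}

/-- The word `1^{m₀} 2^{d+n₀-1} 1 2^{n₁-1} ⋯ 1 2^{n_{d-1}-1} 1 2^{n_d}`. -/
def Rword (m0 : ℕ) (ns : List ℕ) : List ℕ :=
  match ns with
  | [] => List.replicate m0 1
  | [n0] => List.replicate m0 1 ++ List.replicate n0 2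
  | n0 :: rest =>
      List.replicate m0 1 ++ List.replicate (rest.length + n0 - 1) 2
        ++ rest.dropLast.flatMap (fun nj => 1 :: List.replicate (nj - 1) 2)
        ++ (1 :: List.replicate (rest.getLastD 0) 2)

def RSet (n : ℕ) : Set (List ℕ) :=
  {w | ∃ m0 ns, m0 ≤ 1 ∧ ns ≠ [] ∧ (∀ j ∈ List.dropLast ns, 1 ≤ j) ∧
        w = Rword m0 ns ∧ w.length = n}

/-- The Fibonacci word `1^{m₀} 2^{n₀} 1 2^{n₁} ⋯ 1 2^{n_d}`. -/
def Fword (m0 : ℕ) (ns : List ℕ) : List ℕ :=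
  List.replicate m0 1 ++ List.replicate (ns.headD 0) 2
    ++ ns.tail.flatMap fun nj => 1 :: List.replicate nj 2


/-! ### Auxiliary machinery for `stmt_18` -/

def bumpLast (m : ℕ) : List (ℕ × ℕ) → List (ℕ × ℕ)
  | [] => []
  | [p] => [(p.1, p.2 + m)]
  | p :: q :: rest => p :: bumpLast m (q :: rest)

def bumpLastN (m : ℕ) : List ℕ → List ℕ
  | [] => []
  | [a] => [a + m]
  | a :: b :: rest => a :: bumpLastN m (b :: rest)

lemma bumpLast_cons (m : ℕ) (p : ℕ × ℕ) (r : List (ℕ × ℕ)) (hr : r ≠ []) :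
    bumpLast m (p :: r) = p :: bumpLast m r := by
  cases r with
  | nil => exact absurd rfl hr
  | cons q rest => rfl

lemma bumpLastN_cons (m : ℕ) (a : ℕ) (r : List ℕ) (hr : r ≠ []) :
    bumpLastN m (a :: r) = a :: bumpLastN m r := by
  cases r with
  | nil => exact absurd rfl hr
  | cons q rest => rfl

lemma bumpLast_ne_nil (m : ℕ) (bs : List (ℕ × ℕ)) (h : bs ≠ []) : bumpLast m bs ≠ [] := by
  cases bs with
  | nil => exact absurd rfl h
  | cons p r => cases r <;> simp [bumpLast]

lemma bumpLastN_ne_nil (m : ℕ) (l : List ℕ) (h : l ≠ []) : bumpLastN m l ≠ [] := by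
  cases l with
  | nil => exact absurd rfl h
  | cons p r => cases r <;> simp [bumpLastN]

lemma bumpLast_dropLast (m : ℕ) : ∀ bs : List (ℕ × ℕ), (bumpLast m bs).dropLast = bs.dropLast
  | [] => rfl
  | [p] => rfl
  | p :: q :: rest => by
      rw [bumpLast]
      rw [List.dropLast_cons_of_ne_nil (bumpLast_ne_nil m (q :: rest) (by simp)),
        List.dropLast_cons_of_ne_nil (by simp : (q :: rest) ≠ [])]
      rw [bumpLast_dropLast m (q :: rest)]

lemma bumpLastN_dropLast (m : ℕ) : ∀ l : List ℕ, (bumpLastN m l).dropLast = l.dropLast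
  | [] => rfl
  | [a] => rfl
  | a :: b :: rest => by
      rw [bumpLastN]
      rw [List.dropLast_cons_of_ne_nil (bumpLastN_ne_nil m (b :: rest) (by simp)),
        List.dropLast_cons_of_ne_nil (by simp : (b :: rest) ≠ [])]
      rw [bumpLastN_dropLast m (b :: rest)]

lemma bumpLast_getLastD (m : ℕ) : ∀ bs : List (ℕ × ℕ), bs ≠ [] → ∀ d,
    (bumpLast m bs).getLastD d = ((bs.getLastD d).1, (bs.getLastD d).2 + m)
  | [], h => absurd rfl h
  | [p], _ => by intro d; simp [bumpLast]
  | p :: q :: rest, _ => by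
      intro d
      rw [bumpLast, List.getLastD_cons, List.getLastD_cons]
      exact bumpLast_getLastD m (q :: rest) (by simp) p

lemma bumpLastN_getLastD (m : ℕ) : ∀ l : List ℕ, l ≠ [] → ∀ d,
    (bumpLastN m l).getLastD d = l.getLastD d + m
  | [], h => absurd rfl h
  | [a], _ => by intro d; simp [bumpLastN]
  | a :: b :: rest, _ => by
      intro d
      rw [bumpLastN, List.getLastD_cons, List.getLastD_cons]
      exact bumpLastN_getLastD m (b :: rest) (by simp) a

lemma bumpLast_map_snd (m : ℕ) : ∀ bs : List (ℕ × ℕ),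
    (bumpLast m bs).map Prod.snd = bumpLastN m (bs.map Prod.snd)
  | [] => rfl
  | [p] => rfl
  | p :: q :: rest => by
      rw [bumpLast, List.map_cons]
      rw [bumpLast_map_snd m (q :: rest)]
      simp [bumpLastN]

lemma blocksAux_nil : ∀ n, blocksAux n [] = [] := by
  intro n; cases n <;> rfl

lemma leadCount_cons_same (a : ℕ) (t : List ℕ) :
    leadCount a (a :: t) = ((leadCount a t).1 + 1, (leadCount a t).2) := by
  simp [leadCount]

lemma leadCount_cons_ne (a b : ℕ) (h : ¬ b = a) (t : List ℕ) :
    leadCount a (b :: t) = (0, b :: t) := by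
  simp [leadCount, h]

lemma leadCount_decomp (a : ℕ) : ∀ w : List ℕ,
    w = List.replicate (leadCount a w).1 a ++ (leadCount a w).2 := by
  intro w
  induction w with
  | nil => rfl
  | cons b t ih =>
    by_cases hb : b = a
    · subst hb
      rw [leadCount_cons_same]
      show b :: t = List.replicate ((leadCount b t).1 + 1) b ++ (leadCount b t).2
      rw [List.replicate_succ, List.cons_append]
      exact congrArg _ ih
    · rw [leadCount_cons_ne a b hb]
      simp

lemma leadCount_replicate_ne (a b : ℕ) (h : ¬ b = a) (m : ℕ) :
    leadCount a (List.replicate m b) = (0, List.replicate m b) := by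
  cases m <;> simp [leadCount, h, List.replicate_succ]

lemma leadCount_replicate_same (a m : ℕ) : leadCount a (List.replicate m a) = (m, []) := by
  induction m with
  | zero => rfl
  | succ k ih => simp [List.replicate_succ, leadCount, ih]

lemma leadCount_append (a : ℕ) (x y : List ℕ) : leadCount a (x ++ y) =
    if (leadCount a x).2 = [] then ((leadCount a x).1 + (leadCount a y).1, (leadCount a y).2)
    else ((leadCount a x).1, (leadCount a x).2 ++ y) := by
  induction x with
  | nil => simp [leadCount]
  | cons b x ih =>
    by_cases hb : b = a
    · subst hb
      rw [List.cons_append, leadCount_cons_same, leadCount_cons_same, ih]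
      split
      · simp [Nat.add_right_comm]
      · simp
    · rw [List.cons_append, leadCount_cons_ne a b hb, leadCount_cons_ne a b hb]
      simp

lemma blocksAux_cons (n : ℕ) (b : ℕ) (t : List ℕ) :
    blocksAux (n + 1) (b :: t) =
      ((leadCount 1 (b :: t)).1, (leadCount 2 (leadCount 1 (b :: t)).2).1)
        :: blocksAux n (leadCount 2 (leadCount 1 (b :: t)).2).2 := rfl

lemma blocksAux_append (m : ℕ) (hm : 1 ≤ m) :
    ∀ n, ∀ w : List ℕ, w.length ≤ n → IsBinary w → w ≠ [] → ∀ fuel, w.length ≤ fuel →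
      blocksAux (fuel + m) (w ++ List.replicate m 2) = bumpLast m (blocksAux fuel w) := by
  intro n
  induction n with
  | zero =>
    intro w hw _ hne _ _
    exact absurd (List.length_eq_zero_iff.mp (Nat.le_zero.mp hw)) hne
  | succ n ih =>
    intro w hwn hbin hne fuel hfuel
    obtain ⟨b, t, rfl⟩ := List.exists_cons_of_ne_nil hne
    obtain ⟨f, rfl⟩ : ∃ f, fuel = f + 1 := ⟨fuel - 1, by simp at hfuel ⊢; omega⟩
    have h1 := leadCount_append 1 (b :: t) (List.replicate m 2)
    rw [leadCount_replicate_ne 1 2 (by norm_num) m] at h1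
    rw [Nat.add_right_comm f 1 m]
    rw [List.cons_append] at h1 ⊢
    rw [blocksAux_cons (f + m) b (t ++ List.replicate m 2), blocksAux_cons f b t, h1]
    by_cases hp2 : (leadCount 1 (b :: t)).2 = []
    · -- w is all ones
      rw [if_pos hp2, hp2]
      have hl2 : leadCount 2 ([] : List ℕ) = (0, []) := rfl
      rw [hl2]
      simp only []
      rw [leadCount_replicate_same 2 m, blocksAux_nil, blocksAux_nil]
      simp [bumpLast]
    · rw [if_neg hp2]
      have h2 := leadCount_append 2 (leadCount 1 (b :: t)).2 (List.replicate m 2)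
      rw [leadCount_replicate_same 2 m] at h2
      by_cases hq2 : (leadCount 2 (leadCount 1 (b :: t)).2).2 = []
      · rw [if_pos hq2] at h2
        simp only []
        rw [h2, hq2, blocksAux_nil, blocksAux_nil]
        simp [bumpLast]
      · rw [if_neg hq2] at h2
        simp only []
        rw [h2]
        -- length bookkeeping
        have hdec1 := leadCount_decomp 1 (b :: t)
        have hdec2 := leadCount_decomp 2 (leadCount 1 (b :: t)).2
        have hlen1 : (b :: t).length =
            (leadCount 1 (b :: t)).1 + (leadCount 1 (b :: t)).2.length := by
          conv_lhs => rw [hdec1]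
          simp
        have hlen2 : (leadCount 1 (b :: t)).2.length =
            (leadCount 2 (leadCount 1 (b :: t)).2).1
              + (leadCount 2 (leadCount 1 (b :: t)).2).2.length := by
          conv_lhs => rw [hdec2]
          simp
        have hpos : 1 ≤ (leadCount 1 (b :: t)).1 + (leadCount 2 (leadCount 1 (b :: t)).2).1 := by
          rcases hbin b (by simp) with hb | hb
          · subst hb
            have h1' : (leadCount 1 (1 :: t)) = ((leadCount 1 t).1 + 1, (leadCount 1 t).2) :=
              leadCount_cons_same 1 t
            rw [h1']
            omega
          · subst hb
            have hp : leadCount 1 (2 :: t) = (0, 2 :: t) :=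
              leadCount_cons_ne 1 2 (by norm_num) t
            have h2' : leadCount 2 (2 :: t) = ((leadCount 2 t).1 + 1, (leadCount 2 t).2) :=
              leadCount_cons_same 2 t
            rw [hp, h2']
            omega
        have hbin' : IsBinary (leadCount 2 (leadCount 1 (b :: t)).2).2 := by
          intro a ha
          apply hbin
          rw [hdec1, hdec2]
          simp [ha]
        have hq2len : (leadCount 2 (leadCount 1 (b :: t)).2).2.length ≤ n := by omega
        have hq2f : (leadCount 2 (leadCount 1 (b :: t)).2).2.length ≤ f := by omega
        rw [ih _ hq2len hbin' hq2 f hq2f]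
        have hbne : blocksAux f (leadCount 2 (leadCount 1 (b :: t)).2).2 ≠ [] := by
          obtain ⟨c', s', hcs'⟩ := List.exists_cons_of_ne_nil hq2
          obtain ⟨g, rfl⟩ : ∃ g, f = g + 1 := ⟨f - 1, by
            rw [hcs'] at hq2f; simp at hq2f; omega⟩
          rw [hcs', blocksAux_cons]
          simp
        rw [bumpLast_cons _ _ _ hbne]

lemma gammaBlocks_cons (p : ℕ × ℕ) (r : List (ℕ × ℕ)) (hr : r ≠ []) :
    gammaBlocks (p :: r) =
      List.replicate p.1 1
        ++ r.dropLast.flatMap (fun q => 2 :: List.replicate (q.1 - 1) 1)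
        ++ (2 :: List.replicate (r.getLastD (0,0)).1 1)
        ++ (let ns := p.2 :: r.map Prod.snd
            ns.dropLast.dropLast.flatMap (fun nj => List.replicate (nj - 1) 2 ++ [1])
              ++ List.replicate (ns.dropLast.getLastD 0 - 1 + ns.getLastD 0) 2) := by
  obtain ⟨q, s, rfl⟩ := List.exists_cons_of_ne_nil hr
  rfl

lemma gammaBlocks_single (p : ℕ × ℕ) :
    gammaBlocks [p] = List.replicate p.1 1 ++ List.replicate p.2 2 := rfl

lemma gammaBlocks_bumpLast (m : ℕ) (bs : List (ℕ × ℕ)) (h : bs ≠ []) :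
    gammaBlocks (bumpLast m bs) = gammaBlocks bs ++ List.replicate m 2 := by
  cases bs with
  | nil => exact absurd rfl h
  | cons p r =>
    cases r with
    | nil =>
      rw [show bumpLast m [p] = [(p.1, p.2 + m)] from rfl, gammaBlocks_single,
        show (p : ℕ × ℕ) = (p.1, p.2) from rfl, gammaBlocks_single]
      rw [List.replicate_add, List.append_assoc]
    | cons q s =>
      rw [bumpLast_cons m p (q :: s) (by simp)]
      rw [gammaBlocks_cons p (q :: s) (by simp),
        gammaBlocks_cons p (bumpLast m (q :: s)) (bumpLast_ne_nil m _ (by simp))]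
      rw [bumpLast_dropLast, bumpLast_getLastD m (q :: s) (by simp), bumpLast_map_snd]
      simp only []
      have hbn : bumpLastN m (p.2 :: (q :: s).map Prod.snd)
          = p.2 :: bumpLastN m ((q :: s).map Prod.snd) :=
        bumpLastN_cons m p.2 _ (by simp)
      rw [← hbn]
      set ns : List ℕ := p.2 :: (q :: s).map Prod.snd with hns
      have hnsne : ns ≠ [] := by simp [hns]
      rw [bumpLastN_dropLast m ns, bumpLastN_getLastD m ns hnsne]
      have harith : ns.dropLast.getLastD 0 - 1 + (ns.getLastD 0 + m)
          = (ns.dropLast.getLastD 0 - 1 + ns.getLastD 0) + m := by omega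
      rw [harith, List.replicate_add]
      simp [List.append_assoc]

lemma blocks_ne_nil (b : ℕ) (t : List ℕ) : blocks (b :: t) ≠ [] := by
  show blocksAux (t.length + 1) (b :: t) ≠ []
  rw [blocksAux_cons]
  simp

theorem stmt_18 (w : List ℕ) (hw : IsBinary w) (m : ℕ) (hm : 1 ≤ m) :
    Gamma (w ++ List.replicate m 2) = Gamma w ++ List.replicate m 2 := by
  cases w with
  | nil =>
    obtain ⟨k, rfl⟩ : ∃ k, m = k + 1 := ⟨m - 1, by omega⟩
    show gammaBlocks (blocks (List.replicate (k+1) 2)) = gammaBlocks (blocks []) ++ _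
    have h0 : blocks ([] : List ℕ) = [] := rfl
    have h1 : blocks (List.replicate (k+1) 2) = [(0, k+1)] := by
      show blocksAux (List.replicate (k+1) 2).length (List.replicate (k+1) 2) = _
      rw [List.length_replicate, List.replicate_succ, blocksAux_cons, ← List.replicate_succ,
        leadCount_replicate_ne 1 2 (by norm_num)]
      simp only [Prod.snd, Prod.fst]
      rw [leadCount_replicate_same, blocksAux_nil]
    rw [h0, h1]
    simp [gammaBlocks]
  | cons b t =>
    unfold Gamma blocks
    rw [List.length_append, List.length_replicate]
    rw [blocksAux_append m hm (b :: t).length (b :: t) le_rfl hw (by simp) _ le_rfl]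
    exact gammaBlocks_bumpLast m (blocks (b :: t)) (blocks_ne_nil b t)
end

section
/- Let ω be a binary word of length n with k ones, write Γ(ω) = b_1⋯b_n, let t be the largest i such that ω ends with 2^i, and set U = b_1⋯b_k and V = b_{k+1}⋯b_{n−t}. Then for every m ≥ 1: if t = 0 then Γ(ω 1^m) = U 1^m V, and if t > 0 then Γ(ω 1^m) = U 2 1^{m−1} V 1 2^{t−1}. -/
def Good (bs : List (ℕ × ℕ)) : Prop :=
  bs ≠ [] ∧ (∀ p ∈ bs.tail, 0 < p.1) ∧ (∀ p ∈ bs.dropLast, 0 < p.2) ∧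
    0 < (bs.headD (0,0)).1 + (bs.headD (0,0)).2

lemma leadCount_not_head (a : ℕ) (r : List ℕ) (h : r.head? ≠ some a) :
    leadCount a r = (0, r) := by
  cases r with
  | nil => rfl
  | cons b r' =>
    simp only [List.head?] at h
    rw [leadCount, if_neg (fun hb => h (by rw [hb]))]

lemma leadCount_replicate_append (a k : ℕ) (r : List ℕ) (h : r.head? ≠ some a) :
    leadCount a (List.replicate k a ++ r) = (k, r) := by
  induction k with
  | zero => simpa using leadCount_not_head a r h
  | succ n ih =>
    rw [List.replicate_succ, List.cons_append, leadCount]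
    simp [ih]

lemma blocksAux_nil_s19 (fuel : ℕ) : blocksAux fuel [] = [] := by
  cases fuel <;> rfl

lemma blockWord_cons (p : ℕ × ℕ) (bs : List (ℕ × ℕ)) :
    blockWord (p :: bs) =
      List.replicate p.1 1 ++ (List.replicate p.2 2 ++ blockWord bs) := by
  simp [blockWord, List.flatMap_cons]

lemma blockWord_head?_one (bs : List (ℕ × ℕ)) (h : ∀ p ∈ bs, 0 < p.1) :
    (blockWord bs).head? ≠ some 2 := by
  cases bs with
  | nil => simp [blockWord]
  | cons p rest =>
    rw [blockWord_cons]
    have hp := h p (by simp)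
    obtain ⟨k, hk⟩ : ∃ k, p.1 = k + 1 := ⟨p.1 - 1, by omega⟩
    rw [hk, List.replicate_succ]
    simp

lemma good_tail (p : ℕ × ℕ) (rest : List (ℕ × ℕ)) (h : Good (p :: rest))
    (hne : rest ≠ []) : Good rest := by
  obtain ⟨-, h1, h2, -⟩ := h
  refine ⟨hne, fun q hq => h1 q (List.mem_of_mem_tail (by simpa using hq)),
    fun q hq => h2 q (by rw [List.dropLast_cons_of_ne_nil hne]; simp [hq]), ?_⟩
  cases rest with
  | nil => exact absurd rfl hne
  | cons q rest' => have := h1 q (by simp); simp; omega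

lemma blocksAux_blockWord (bs : List (ℕ × ℕ)) (h : Good bs) :
    ∀ fuel, (blockWord bs).length ≤ fuel → blocksAux fuel (blockWord bs) = bs := by
  induction bs with
  | nil => exact absurd rfl h.1
  | cons p rest ih =>
    intro fuel hfuel
    obtain ⟨-, h1, h2, h3⟩ := h
    have hlen : 0 < (blockWord (p :: rest)).length := by
      rw [blockWord_cons]
      simp only [List.length_append, List.length_replicate]
      simp at h3; omega
    obtain ⟨f, rfl⟩ : ∃ f, fuel = f + 1 := ⟨fuel - 1, by omega⟩
    rw [blockWord_cons, blocksAux]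
    rotate_left
    · intro h'
      rw [blockWord_cons] at hlen
      rw [h'] at hlen
      simp at hlen
    have hrest2 : (blockWord rest).head? ≠ some 2 := by
      apply blockWord_head?_one
      intro q hq; exact h1 q (by simpa using hq)
    have h2head : (List.replicate p.2 2 ++ blockWord rest).head? ≠ some 1 := by
      cases hp2 : p.2 with
      | zero =>
        cases rest with
        | nil => simp [blockWord]
        | cons q rest' =>
          exfalso
          have := h2 p (by rw [List.dropLast_cons_of_ne_nil (by simp)]; simp)
          omega
      | succ k => rw [List.replicate_succ]; simp
    rw [leadCount_replicate_append 1 p.1 _ h2head]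
    simp only
    rw [leadCount_replicate_append 2 p.2 _ hrest2]
    simp only
    cases hrest : rest with
    | nil => subst hrest; simp [blockWord, blocksAux_nil_s19]
    | cons q rest' =>
      rw [← hrest]
      congr 1
      apply ih (good_tail p rest ⟨by simp, h1, h2, h3⟩ (by rw [hrest]; simp))
      rw [blockWord_cons] at hfuel
      simp only [List.length_append, List.length_replicate] at hfuel ⊢
      simp at h3
      omega


lemma exists_good (w : List ℕ) (hw : IsBinary w) (hne : w ≠ []) :
    ∃ bs, Good bs ∧ w = blockWord bs := by
  induction w with
  | nil => exact absurd rfl hne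
  | cons a w' ih =>
    have ha := hw a (by simp)
    by_cases hw' : w' = []
    · subst hw'
      rcases ha with rfl | rfl
      · exact ⟨[(1,0)], ⟨by simp, by simp, by simp, by simp⟩, by simp [blockWord]⟩
      · exact ⟨[(0,1)], ⟨by simp, by simp, by simp, by simp⟩, by simp [blockWord]⟩
    · obtain ⟨bs', ⟨hbne, hb1, hb2, hb3⟩, hbw⟩ := ih (fun b hb => hw b (by simp [hb])) hw'
      cases bs' with
      | nil => exact absurd rfl hbne
      | cons p rest =>
        obtain ⟨m0, n0⟩ := p
        rcases ha with rfl | rfl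
        · refine ⟨(m0+1, n0) :: rest, ⟨by simp, hb1, ?_, by simp⟩, ?_⟩
          · cases rest with
            | nil => simp
            | cons q rest' =>
              intro x hx
              rw [List.dropLast_cons_of_ne_nil (by simp)] at hx
              rcases (by simpa using hx) with rfl | hx'
              · exact hb2 (m0,n0) (by rw [List.dropLast_cons_of_ne_nil (by simp)]; simp)
              · exact hb2 x (by rw [List.dropLast_cons_of_ne_nil (by simp)]; simp [hx'])
          · rw [hbw, blockWord_cons, blockWord_cons]
            simp [List.replicate_succ]
        · by_cases hm0 : m0 = 0
          · subst hm0
            refine ⟨(0, n0+1) :: rest, ⟨by simp, hb1, ?_, by simp⟩, ?_⟩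
            · cases rest with
              | nil => simp
              | cons q rest' =>
                intro x hx
                rw [List.dropLast_cons_of_ne_nil (by simp)] at hx
                rcases (by simpa using hx) with rfl | hx'
                · simp
                · exact hb2 x (by rw [List.dropLast_cons_of_ne_nil (by simp)]; simp [hx'])
            · rw [hbw, blockWord_cons, blockWord_cons]
              simp [List.replicate_succ]
          · refine ⟨(0, 1) :: (m0, n0) :: rest, ⟨by simp, ?_, ?_, by simp⟩, ?_⟩
            · intro x hx
              rcases (by simpa using hx) with rfl | hx'
              · simpa using Nat.pos_of_ne_zero hm0
              · exact hb1 x (by simp [hx'])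
            · intro x hx
              rw [List.dropLast_cons_of_ne_nil (by simp)] at hx
              rcases (by simpa using hx) with rfl | hx'
              · simp
              · exact hb2 x hx'
            · rw [hbw, blockWord_cons]
              simp [blockWord_cons, List.replicate_succ]

lemma blocks_eq (w : List ℕ) (bs : List (ℕ × ℕ)) (h : Good bs)
    (hwb : w = blockWord bs) : blocks w = bs := by
  rw [blocks, hwb]
  exact blocksAux_blockWord bs h _ le_rfl

lemma replicate_suffix_replicate (a b : ℕ) (x : ℕ) (h : a ≤ b) :
    List.replicate a x <:+ List.replicate b x :=
  ⟨List.replicate (b - a) x, by rw [← List.replicate_add]; congr 1; omega⟩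

lemma suffix_eq_of_length {l1 l2 w : List ℕ} (h1 : l1 <:+ w) (h2 : l2 <:+ w)
    (hl : l1.length = l2.length) : l1 = l2 := by
  obtain ⟨u1, hu1⟩ := h1
  obtain ⟨u2, hu2⟩ := h2
  have h : u1 ++ l1 = u2 ++ l2 := by rw [hu1, hu2]
  have hu : u1.length = u2.length := by
    have := congrArg List.length h; simp at this; omega
  exact (List.append_inj h hu).2

lemma trailing_twos (bs init : List (ℕ × ℕ)) (md nd : ℕ) (h : Good bs)
    (hsplit : bs = init ++ [(md, nd)]) :
    List.replicate nd 2 <:+ blockWord bs ∧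
      ¬ List.replicate (nd + 1) 2 <:+ blockWord bs := by
  obtain ⟨-, h1, -, h3⟩ := h
  have hw : blockWord bs = (blockWord init ++ List.replicate md 1) ++ List.replicate nd 2 := by
    rw [hsplit, blockWord, List.flatMap_append]
    simp [blockWord, List.append_assoc]
  constructor
  · rw [hw]; exact List.suffix_append _ _
  · intro hsuf
    rcases Nat.eq_zero_or_pos md with hmd | hmd
    · have hinit : init = [] := by
        by_contra hi
        obtain ⟨q, init', rfl⟩ : ∃ q init', init = q :: init' := by
          cases init with | nil => exact absurd rfl hi | cons q i => exact ⟨q, i, rfl⟩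
        have := h1 (md, nd) (by rw [hsplit]; simp)
        omega
      subst hinit
      rw [hsplit] at hsuf hw
      have := hsuf.length_le
      rw [hw] at this
      simp [blockWord] at this
      omega
    · obtain ⟨s, hs⟩ : ∃ s, md = s + 1 := ⟨md - 1, by omega⟩
      have hw2 : blockWord bs =
          (blockWord init ++ List.replicate s 1) ++ (1 :: List.replicate nd 2) := by
        rw [hw, hs, List.replicate_succ']
        simp [List.append_assoc]
      have hsuf2 : (1 :: List.replicate nd 2) <:+ blockWord bs := by
        rw [hw2]; exact List.suffix_append _ _
      have := suffix_eq_of_length hsuf hsuf2 (by simp)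
      rw [List.replicate_succ] at this
      simp at this

lemma count_one_blockWord (bs : List (ℕ × ℕ)) :
    (blockWord bs).count 1 = (bs.map Prod.fst).sum := by
  induction bs with
  | nil => simp [blockWord]
  | cons p rest ih =>
    rw [blockWord_cons]
    simp [List.count_append, List.count_replicate, ih]

lemma length_blockWord (bs : List (ℕ × ℕ)) :
    (blockWord bs).length = (bs.map fun p => p.1 + p.2).sum := by
  induction bs with
  | nil => simp [blockWord]
  | cons p rest ih => rw [blockWord_cons]; simp [ih]; omega

lemma length_flat_g (l : List (ℕ × ℕ)) (h : ∀ p ∈ l, 0 < p.1) :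
    (l.flatMap fun r => 2 :: List.replicate (r.1 - 1) 1).length = (l.map Prod.fst).sum := by
  induction l with
  | nil => simp
  | cons p rest ih =>
    have := h p (by simp)
    rw [List.flatMap_cons]
    simp only [List.length_append, ih (fun q hq => h q (by simp [hq])), List.map_cons,
      List.sum_cons, List.length_cons, List.length_replicate]
    omega

lemma length_flat_f (l : List ℕ) (h : ∀ x ∈ l, 0 < x) :
    (l.flatMap fun nj => List.replicate (nj - 1) 2 ++ [1]).length = l.sum := by
  induction l with
  | nil => simp
  | cons x rest ih =>
    have := h x (by simp)
    rw [List.flatMap_cons]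
    simp only [List.length_append, ih (fun q hq => h q (by simp [hq])), List.sum_cons,
      List.length_replicate, List.length_cons, List.length_nil]
    omega

lemma sum_map_add (l : List (ℕ × ℕ)) :
    (l.map fun p => p.1 + p.2).sum = (l.map Prod.fst).sum + (l.map Prod.snd).sum := by
  induction l with
  | nil => simp
  | cons p rest ih => simp [ih]; omega

lemma gammaBlocks_cons_s19 (m0 n0 : ℕ) (q : ℕ × ℕ) (l : List (ℕ × ℕ)) :
    gammaBlocks ((m0, n0) :: q :: l) =
      List.replicate m0 1
        ++ (q :: l).dropLast.flatMap (fun r => 2 :: List.replicate (r.1 - 1) 1)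
        ++ (2 :: List.replicate (((q :: l).getLastD (0,0)).1) 1)
        ++ ((n0 :: (q :: l).map Prod.snd).dropLast.dropLast.flatMap
              (fun nj => List.replicate (nj - 1) 2 ++ [1])
            ++ List.replicate ((n0 :: (q :: l).map Prod.snd).dropLast.getLastD 0 - 1
                + (n0 :: (q :: l).map Prod.snd).getLastD 0) 2) := by
  rfl

lemma gammaBlocks_singleton (m0 n0 : ℕ) :
    gammaBlocks [(m0, n0)] = List.replicate m0 1 ++ List.replicate n0 2 := rfl

theorem stmt_19 (w : List ℕ) (hw : IsBinary w) (t : ℕ)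
    (ht : List.replicate t 2 <:+ w) (ht' : ¬ List.replicate (t + 1) 2 <:+ w)
    (m : ℕ) (hm : 1 ≤ m) :
    (t = 0 →
      Gamma (w ++ List.replicate m 1) =
        (Gamma w).take (w.count 1) ++ List.replicate m 1 ++
          (Gamma w).drop (w.count 1)) ∧
    (0 < t →
      Gamma (w ++ List.replicate m 1) =
        (Gamma w).take (w.count 1) ++ [2] ++ List.replicate (m - 1) 1 ++
          ((Gamma w).take (w.length - t)).drop (w.count 1) ++ [1] ++
          List.replicate (t - 1) 2) := by
  have hm1 : List.replicate m 1 = List.replicate (m - 1) 1 ++ [1] := by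
    rw [← List.replicate_succ']; congr 1; omega
  by_cases hw0 : w = []
  · subst hw0
    have ht0 : t = 0 := by
      have := ht.length_le; simp at this; omega
    subst ht0
    refine ⟨fun _ => ?_, fun h => absurd h (by omega)⟩
    have hb' : blocks ([] ++ List.replicate m 1) = [(m, 0)] :=
      blocks_eq _ _ ⟨by simp, by simp, by simp, by simp; omega⟩ (by simp [blockWord])
    rw [Gamma, hb', gammaBlocks_singleton]
    simp [Gamma, blocks, blocksAux, gammaBlocks]
  · obtain ⟨bs, hg, hwbs⟩ := exists_good w hw hw0
    have hbl : blocks w = bs := blocks_eq w bs hg hwbs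
    rcases List.eq_nil_or_concat bs with rfl | ⟨init, ⟨md, nd⟩, hsplit⟩
    · exact absurd rfl hg.1
    rw [List.concat_eq_append] at hsplit
    have htt := trailing_twos bs init md nd hg hsplit
    have htnd : t = nd := by
      rcases lt_trichotomy t nd with h | h | h
      · exact absurd ((replicate_suffix_replicate (t+1) nd 2 (by omega)).trans
          (by rw [hwbs]; exact htt.1)) ht'
      · exact h
      · refine absurd ((replicate_suffix_replicate (nd+1) t 2 (by omega)).trans ht) ?_
        rw [hwbs]; exact htt.2
    subst htnd
    cases init with
    | nil =>
      simp only [List.nil_append] at hsplit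
      subst hsplit
      have hGw : Gamma w = List.replicate md 1 ++ List.replicate t 2 := by
        rw [Gamma, hbl, gammaBlocks_singleton]
      have hwb : w = List.replicate md 1 ++ List.replicate t 2 := by
        rw [hwbs]; simp [blockWord]
      have hcount : w.count 1 = md := by
        rw [hwb]; simp [List.count_append, List.count_replicate]
      have hlenw : w.length = md + t := by rw [hwb]; simp
      constructor
      · intro ht0
        subst ht0
        have hmd : 0 < md := by have := hg.2.2.2; simpa using this
        have hb' : blocks (w ++ List.replicate m 1) = [(md + m, 0)] := by
          refine blocks_eq _ _ ⟨by simp, by simp, by simp, by simp; omega⟩ ?_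
          rw [hwb]
          simp only [blockWord, List.flatMap_cons, List.flatMap_nil]
          rw [List.replicate_add]
          simp
        rw [Gamma, hb', gammaBlocks_singleton, hGw, hcount, List.replicate_add]
        simp [List.take_replicate, List.drop_replicate]
      · intro htpos
        have hb' : blocks (w ++ List.replicate m 1) = [(md, t), (m, 0)] := by
          refine blocks_eq _ _ ⟨by simp, ?_, ?_, by simp; omega⟩ ?_
          · intro p hp; simp at hp; subst hp; simpa [Nat.pos_iff_ne_zero, Nat.one_le_iff_ne_zero] using hm
          · intro p hp; simp at hp; subst hp; simpa using htpos
          · rw [hwb]; simp [blockWord, List.append_assoc]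
        rw [Gamma, hb', gammaBlocks_cons_s19, hGw, hcount, hlenw]
        have h1 : md + t - t = md := by omega
        rw [h1, List.take_left' (by simp : (List.replicate md 1).length = md)]
        simp [hm1, List.drop_replicate, List.append_assoc]
    | cons b0 init2 =>
      obtain ⟨m0, n0⟩ := b0
      rw [List.cons_append] at hsplit
      subst hsplit
      have hmd : 0 < md := hg.2.1 (md, t) (by simp)
      have hminit : ∀ p ∈ init2, 0 < p.1 := fun p hp => hg.2.1 p (by simp [hp])
      have hdrop : ((m0, n0) :: (init2 ++ [(md, t)])).dropLast = (m0, n0) :: init2 := by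
        rw [← List.cons_append, List.dropLast_concat]
      have hn0 : 0 < n0 := hg.2.2.1 (m0, n0) (by rw [hdrop]; simp)
      have hninit : ∀ p ∈ init2, 0 < p.2 := fun p hp => hg.2.2.1 p (by rw [hdrop]; simp [hp])
      obtain ⟨N', L, hN⟩ : ∃ N' L, n0 :: init2.map Prod.snd = N' ++ [L] := by
        rcases List.eq_nil_or_concat (n0 :: init2.map Prod.snd) with h | ⟨N', L, h⟩
        · simp at h
        · exact ⟨N', L, by rw [h, List.concat_eq_append]⟩
      have hNpos : ∀ x ∈ N' ++ [L], 0 < x := by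
        rw [← hN]; intro x hx
        rcases List.mem_cons.1 hx with rfl | hx'
        · exact hn0
        · obtain ⟨p, hp, rfl⟩ := List.mem_map.1 hx'
          exact hninit p hp
      have hN'pos : ∀ x ∈ N', 0 < x := fun x hx => hNpos x (by simp [hx])
      have hL : 0 < L := hNpos L (by simp)
      have hmd1 : List.replicate md 1 = List.replicate (md - 1) 1 ++ [1] := by
        rw [← List.replicate_succ']; congr 1; omega
      obtain ⟨q0, l0, hql⟩ : ∃ q0 l0, init2 ++ [(md, t)] = q0 :: l0 := by
        cases init2 with
        | nil => exact ⟨_, _, rfl⟩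
        | cons a b => exact ⟨_, _, rfl⟩
      have hGw : Gamma w =
          (List.replicate m0 1
              ++ init2.flatMap (fun (r : ℕ × ℕ) => 2 :: List.replicate (r.1 - 1) 1)
              ++ (2 :: List.replicate (md - 1) 1)) ++
            (1 :: (N'.flatMap (fun nj => List.replicate (nj - 1) 2 ++ [1])
              ++ (List.replicate (L - 1) 2 ++ List.replicate t 2))) := by
        rw [Gamma, hbl, hql, gammaBlocks_cons_s19, ← hql]
        rw [List.dropLast_concat, List.getLastD_concat]
        simp only [List.map_append, List.map_cons, List.map_nil]
        rw [show (n0 :: (List.map Prod.snd init2 ++ [t]))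
            = (n0 :: List.map Prod.snd init2) ++ [t] by simp]
        rw [List.dropLast_concat, List.getLastD_concat, hN,
          List.dropLast_concat, List.getLastD_concat]
        rw [List.replicate_add, hmd1]
        simp [List.append_assoc]
      have e1 : (init2.flatMap fun r => 2 :: List.replicate (r.1 - 1) 1).length
          = (init2.map Prod.fst).sum := length_flat_g _ hminit
      have e2 : (N'.flatMap fun nj => List.replicate (nj - 1) 2 ++ [1]).length
          = N'.sum := length_flat_f _ hN'pos
      have e3 : N'.sum + L = n0 + (init2.map Prod.snd).sum := by
        have := congrArg List.sum hN; simp at this; omega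
      have hA'len : (List.replicate m0 1
          ++ init2.flatMap (fun (r : ℕ × ℕ) => 2 :: List.replicate (r.1 - 1) 1)
          ++ (2 :: List.replicate (md - 1) 1)).length = w.count 1 := by
        rw [hwbs, count_one_blockWord]
        simp [e1, List.map_append]
        omega
      have hU : (Gamma w).take (w.count 1) =
          List.replicate m0 1
            ++ init2.flatMap (fun (r : ℕ × ℕ) => 2 :: List.replicate (r.1 - 1) 1)
            ++ (2 :: List.replicate (md - 1) 1) := by
        rw [hGw]; exact List.take_left' hA'len
      have hV : (Gamma w).drop (w.count 1) =
          1 :: (N'.flatMap (fun nj => List.replicate (nj - 1) 2 ++ [1])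
            ++ (List.replicate (L - 1) 2 ++ List.replicate t 2)) := by
        rw [hGw]; exact List.drop_left' hA'len
      constructor
      · intro ht0
        subst ht0
        have hgood' : Good ((m0, n0) :: (init2 ++ [(md + m, 0)])) := by
          refine ⟨by simp, ?_, ?_, by simp; omega⟩
          · intro p hp
            simp only [List.tail_cons, List.mem_append, List.mem_singleton] at hp
            rcases hp with hp | rfl
            · exact hminit p hp
            · simp; omega
          · intro p hp
            rw [← List.cons_append, List.dropLast_concat] at hp
            rcases List.mem_cons.1 hp with rfl | hp'
            · exact hn0
            · exact hninit p hp'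
        have hb' : blocks (w ++ List.replicate m 1)
            = (m0, n0) :: (init2 ++ [(md + m, 0)]) := by
          refine blocks_eq _ _ hgood' ?_
          rw [hwbs]
          simp only [blockWord, List.flatMap_append, List.flatMap_cons, List.flatMap_nil]
          rw [List.replicate_add md m]
          simp [List.append_assoc]
        obtain ⟨q1, l1, hql1⟩ : ∃ q1 l1, init2 ++ [(md + m, 0)] = q1 :: l1 := by
          cases init2 with
          | nil => exact ⟨_, _, rfl⟩
          | cons a b => exact ⟨_, _, rfl⟩
        rw [Gamma, hb', hql1, gammaBlocks_cons_s19, ← hql1, hU, hV]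
        rw [List.dropLast_concat, List.getLastD_concat]
        simp only [List.map_append, List.map_cons, List.map_nil]
        rw [show (n0 :: (List.map Prod.snd init2 ++ [0]))
            = (n0 :: List.map Prod.snd init2) ++ [0] by simp]
        rw [List.dropLast_concat, List.getLastD_concat, hN,
          List.dropLast_concat, List.getLastD_concat]
        have hmm2 : List.replicate (md + m) 1
            = List.replicate (md - 1) 1 ++ (List.replicate m 1 ++ [1]) := by
          rw [← List.replicate_succ', ← List.replicate_add]
          congr 1; omega
        rw [hmm2]
        simp [List.append_assoc]
        rw [List.replicate_add, List.append_assoc]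
      · intro htpos
        have hgood' : Good ((m0, n0) :: (init2 ++ [(md, t), (m, 0)])) := by
          refine ⟨by simp, ?_, ?_, by simp; omega⟩
          · intro p hp
            simp only [List.tail_cons] at hp
            rcases List.mem_append.1 hp with hp' | hp'
            · exact hminit p hp'
            · simp only [List.mem_cons, List.mem_singleton] at hp'
              rcases hp' with rfl | rfl | h
              · simpa using hmd
              · simpa [Nat.pos_iff_ne_zero, Nat.one_le_iff_ne_zero] using hm
              · simp at h
          · intro p hp
            rw [show (m0, n0) :: (init2 ++ [(md, t), (m, 0)])
                = ((m0, n0) :: (init2 ++ [(md, t)])) ++ [(m, 0)] by simp,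
              List.dropLast_concat] at hp
            rcases List.mem_cons.1 hp with rfl | hp'
            · exact hn0
            · rcases (List.mem_append.1 hp') with hp'' | hp''
              · exact hninit p hp''
              · rcases List.mem_singleton.1 hp'' with rfl
                simpa using htpos
        have hb' : blocks (w ++ List.replicate m 1)
            = (m0, n0) :: (init2 ++ [(md, t), (m, 0)]) := by
          refine blocks_eq _ _ hgood' ?_
          rw [hwbs]
          simp only [blockWord, List.flatMap_append, List.flatMap_cons, List.flatMap_nil]
          simp [List.append_assoc]
        obtain ⟨q2, l2, hql2⟩ : ∃ q2 l2, init2 ++ [(md, t), (m, 0)] = q2 :: l2 := by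
          cases init2 with
          | nil => exact ⟨_, _, rfl⟩
          | cons a b => exact ⟨_, _, rfl⟩
        have hGw2 : Gamma w =
            ((List.replicate m0 1
                ++ init2.flatMap (fun (r : ℕ × ℕ) => 2 :: List.replicate (r.1 - 1) 1)
                ++ (2 :: List.replicate (md - 1) 1)) ++
              (1 :: (N'.flatMap (fun nj => List.replicate (nj - 1) 2 ++ [1])
                ++ List.replicate (L - 1) 2))) ++ List.replicate t 2 := by
          rw [hGw]; simp [List.append_assoc]
        have hClen : ((List.replicate m0 1
            ++ init2.flatMap (fun (r : ℕ × ℕ) => 2 :: List.replicate (r.1 - 1) 1)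
            ++ (2 :: List.replicate (md - 1) 1)) ++
              (1 :: (N'.flatMap (fun nj => List.replicate (nj - 1) 2 ++ [1])
                ++ List.replicate (L - 1) 2))).length = w.length - t := by
          rw [hwbs, length_blockWord]
          simp [e1, e2, List.map_append, sum_map_add]
          omega
        have hVt : ((Gamma w).take (w.length - t)).drop (w.count 1) =
            1 :: (N'.flatMap (fun nj => List.replicate (nj - 1) 2 ++ [1])
              ++ List.replicate (L - 1) 2) := by
          rw [hGw2, List.take_left' hClen]
          exact List.drop_left' hA'len
        rw [Gamma, hb', hql2, gammaBlocks_cons_s19, ← hql2, hU, hVt]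
        rw [show init2 ++ [(md, t), (m, 0)] = (init2 ++ [(md, t)]) ++ [(m, 0)] by simp]
        rw [List.dropLast_concat, List.getLastD_concat, List.flatMap_append]
        simp only [List.flatMap_cons, List.flatMap_nil, List.map_append,
          List.map_cons, List.map_nil]
        rw [show (n0 :: (List.map Prod.snd init2 ++ [t] ++ [0]))
            = ((n0 :: List.map Prod.snd init2) ++ [t]) ++ [0] by simp]
        rw [List.dropLast_concat, List.getLastD_concat,
          List.dropLast_concat, List.getLastD_concat, hN, List.flatMap_append]
        simp only [List.flatMap_cons, List.flatMap_nil]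
        rw [hm1]
        simp [List.append_assoc]
end
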